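/- Consider a multi-layer ScBM with population matrices P_l = ρ Y B_l Zᵀ, and let K := rank(Σ_{l=1}^L B_l B_lᵀ). Then the matrix U := Y Δ_y^{-1} Q^R ∈ ℝ^{n×K} has orthonormal columns and satisfies Σ_{l=1}^L P_l P_lᵀ = ρ² · U D^R Uᵀ; in other words, the columns of Y Δ_y^{-1} Q^R form an orthonormal eigenbasis of Σ_{l=1}^L P_l P_lᵀ corresponding to its nonzero eigenvalues ρ² D^R_{11}, …, ρ² D^R_{KK}. -/
import Mathlib


open Matrix Finset
open scoped BigOperators Classical

noncomputable section

/-- Membership matrix associated with a cluster assignment `g`. -/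
def memb {n K : ℕ} (g : Fin n → Fin K) : Matrix (Fin n) (Fin K) ℝ :=
  Matrix.of fun i k => if g i = k then 1 else 0

/-- Size of cluster `k` under assignment `g`. -/
def csize {n K : ℕ} (g : Fin n → Fin K) (k : Fin K) : ℕ :=
  (Finset.univ.filter fun i => g i = k).card

/-- Diagonal matrix Δ = diag(√n_1, …, √n_K). -/
def Dmat {n K : ℕ} (g : Fin n → Fin K) : Matrix (Fin K) (Fin K) ℝ :=
  Matrix.diagonal fun k => Real.sqrt (csize g k)

/-- Diagonal matrix Δ⁻¹ = diag(1/√n_1, …, 1/√n_K). -/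
def DmatInv {n K : ℕ} (g : Fin n → Fin K) : Matrix (Fin K) (Fin K) ℝ :=
  Matrix.diagonal fun k => (Real.sqrt (csize g k))⁻¹


lemma memb_gram {n K : ℕ} (g : Fin n → Fin K) :
    (memb g)ᵀ * memb g = Matrix.diagonal (fun k => (csize g k : ℝ)) := by
  ext a b
  simp only [Matrix.mul_apply, Matrix.transpose_apply, memb, Matrix.of_apply,
    Matrix.diagonal_apply]
  by_cases hab : a = b
  · subst hab
    simp only [if_pos rfl, csize]
    rw [Finset.card_filter]
    push_cast
    apply Finset.sum_congr rfl
    intro i _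
    by_cases h : g i = a <;> simp [h]
  · rw [if_neg hab]
    apply Finset.sum_eq_zero
    intro i _
    by_cases h : g i = a
    · have : ¬ g i = b := by rw [h]; exact hab
      simp [this]
    · simp [h]

lemma Dmat_sq {n K : ℕ} (g : Fin n → Fin K) :
    Dmat g ^ 2 = Matrix.diagonal (fun k => (csize g k : ℝ)) := by
  rw [sq, Dmat, Matrix.diagonal_mul_diagonal]
  have : (fun k => Real.sqrt (csize g k) * Real.sqrt (csize g k))
      = fun k => ((csize g k : ℝ)) :=
    funext fun k => Real.mul_self_sqrt (Nat.cast_nonneg _)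
  rw [this]

lemma DmatInv_mul_Dmat {n K : ℕ} (g : Fin n → Fin K) (h : ∀ k, 0 < csize g k) :
    DmatInv g * Dmat g = 1 := by
  rw [DmatInv, Dmat, Matrix.diagonal_mul_diagonal]
  have : (fun k => (Real.sqrt (csize g k))⁻¹ * Real.sqrt (csize g k))
      = fun _ : Fin K => (1 : ℝ) := by
    funext k
    have hk : Real.sqrt (csize g k) ≠ 0 := by
      refine Real.sqrt_ne_zero'.mpr ?_
      exact_mod_cast h k
    field_simp
  rw [this, Matrix.diagonal_one]

lemma Dmat_mul_DmatInv {n K : ℕ} (g : Fin n → Fin K) (h : ∀ k, 0 < csize g k) :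
    Dmat g * DmatInv g = 1 := by
  rw [Dmat, DmatInv, Matrix.diagonal_mul_diagonal]
  have : (fun k => Real.sqrt (csize g k) * (Real.sqrt (csize g k))⁻¹)
      = fun _ : Fin K => (1 : ℝ) := by
    funext k
    have hk : Real.sqrt (csize g k) ≠ 0 := by
      refine Real.sqrt_ne_zero'.mpr ?_
      exact_mod_cast h k
    field_simp
  rw [this, Matrix.diagonal_one]

/-- the matrix U = Y Δ_y⁻¹ Q^R is a column-orthonormal eigenbasis
of ∑ P_l P_lᵀ with nonzero eigenvalues ρ² D^R_{mm}. -/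
theorem stmt14
    (n L Ky Kz K : ℕ) (hn : 0 < n) (hL : 0 < L)
    (ρ : ℝ) (hρ0 : 0 < ρ) (hρ1 : ρ ≤ 1)
    (gy : Fin n → Fin Ky) (gz : Fin n → Fin Kz)
    (hny : ∀ k, 0 < csize gy k) (hnz : ∀ k, 0 < csize gz k)
    (B : Fin L → Matrix (Fin Ky) (Fin Kz) ℝ)
    (hB : ∀ l a b, 0 ≤ B l a b ∧ B l a b ≤ 1)
    (P : Fin L → Matrix (Fin n) (Fin n) ℝ)
    (hP : ∀ l, P l = ρ • (memb gy * B l * (memb gz)ᵀ))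
    -- K = rank(∑ B_l B_lᵀ)
    (hrank : (∑ l, B l * (B l)ᵀ).rank = K)
    -- eigendecomposition Δ_y (∑ B_l Δ_z² B_lᵀ) Δ_y = Q^R D^R (Q^R)ᵀ
    (QR : Matrix (Fin Ky) (Fin K) ℝ) (hQorth : QRᵀ * QR = 1)
    (dR : Fin K → ℝ) (hdR : ∀ m, dR m ≠ 0)
    (hQdec : Dmat gy * (∑ l, B l * (Dmat gz) ^ 2 * (B l)ᵀ) * Dmat gy =
      QR * Matrix.diagonal dR * QRᵀ)
    (U : Matrix (Fin n) (Fin K) ℝ)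
    (hU : U = memb gy * DmatInv gy * QR) :
    -- U has orthonormal columns
    Uᵀ * U = 1 ∧
    -- ∑ P_l P_lᵀ = ρ² · U D^R Uᵀ
    (∑ l, P l * (P l)ᵀ) = (ρ ^ 2) • (U * Matrix.diagonal dR * Uᵀ) ∧
    -- the columns of U are eigenvectors with eigenvalues ρ² D^R_{mm}
    (∑ l, P l * (P l)ᵀ) * U = U * Matrix.diagonal (fun m => ρ ^ 2 * dR m) := by
  have hYY : (memb gy)ᵀ * memb gy = Dmat gy * Dmat gy := by
    rw [memb_gram, ← Dmat_sq, sq]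
  have hZZ : (memb gz)ᵀ * memb gz = Dmat gz ^ 2 := by
    rw [memb_gram, Dmat_sq]
  have hID : DmatInv gy * Dmat gy = 1 := DmatInv_mul_Dmat gy hny
  have hDI : Dmat gy * DmatInv gy = 1 := Dmat_mul_DmatInv gy hny
  have hDIt : (DmatInv gy)ᵀ = DmatInv gy := Matrix.diagonal_transpose _
  have h1 : Uᵀ * U = 1 := by
    rw [hU, Matrix.transpose_mul, Matrix.transpose_mul, hDIt]
    calc QRᵀ * (DmatInv gy * (memb gy)ᵀ) * (memb gy * DmatInv gy * QR)
        = QRᵀ * (DmatInv gy * ((memb gy)ᵀ * memb gy) * DmatInv gy) * QR := by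
          simp only [Matrix.mul_assoc]
      _ = QRᵀ * ((DmatInv gy * Dmat gy) * (Dmat gy * DmatInv gy)) * QR := by
          rw [hYY]; simp only [Matrix.mul_assoc]
      _ = 1 := by rw [hID, hDI, Matrix.one_mul, Matrix.mul_one, hQorth]
  have hS : (∑ l, B l * (Dmat gz) ^ 2 * (B l)ᵀ)
      = DmatInv gy * (QR * Matrix.diagonal dR * QRᵀ) * DmatInv gy := by
    calc (∑ l, B l * (Dmat gz) ^ 2 * (B l)ᵀ)
        = (DmatInv gy * Dmat gy) * (∑ l, B l * (Dmat gz) ^ 2 * (B l)ᵀ)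
            * (Dmat gy * DmatInv gy) := by
          rw [hID, hDI, Matrix.one_mul, Matrix.mul_one]
      _ = DmatInv gy * (Dmat gy * (∑ l, B l * (Dmat gz) ^ 2 * (B l)ᵀ) * Dmat gy)
            * DmatInv gy := by noncomm_ring
      _ = DmatInv gy * (QR * Matrix.diagonal dR * QRᵀ) * DmatInv gy := by rw [hQdec]
  have h2 : (∑ l, P l * (P l)ᵀ) = (ρ ^ 2) • (U * Matrix.diagonal dR * Uᵀ) := by
    have hterm : ∀ l, P l * (P l)ᵀ
        = (ρ ^ 2) • (memb gy * (B l * (Dmat gz) ^ 2 * (B l)ᵀ) * (memb gy)ᵀ) := by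
      intro l
      rw [hP l, Matrix.transpose_smul, Matrix.smul_mul, Matrix.mul_smul, smul_smul, ← sq]
      congr 1
      rw [Matrix.transpose_mul, Matrix.transpose_mul, Matrix.transpose_transpose]
      calc memb gy * B l * (memb gz)ᵀ * ((memb gz)ᵀᵀ * ((B l)ᵀ * (memb gy)ᵀ))
          = memb gy * (B l * ((memb gz)ᵀ * memb gz) * (B l)ᵀ) * (memb gy)ᵀ := by
            rw [Matrix.transpose_transpose]; simp only [Matrix.mul_assoc]
        _ = memb gy * (B l * (Dmat gz) ^ 2 * (B l)ᵀ) * (memb gy)ᵀ := by rw [hZZ]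
    calc (∑ l, P l * (P l)ᵀ)
        = (ρ ^ 2) • (memb gy * (∑ l, B l * (Dmat gz) ^ 2 * (B l)ᵀ) * (memb gy)ᵀ) := by
          rw [Matrix.mul_sum, Matrix.sum_mul, Finset.smul_sum]
          exact Finset.sum_congr rfl fun l _ => hterm l
      _ = (ρ ^ 2) • (U * Matrix.diagonal dR * Uᵀ) := by
          rw [hS, hU, Matrix.transpose_mul, Matrix.transpose_mul, hDIt]
          congr 1
          simp only [Matrix.mul_assoc]
  refine ⟨h1, h2, ?_⟩
  rw [h2, Matrix.smul_mul]
  have h3 : U * Matrix.diagonal dR * Uᵀ * U = U * Matrix.diagonal dR := by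
    rw [Matrix.mul_assoc, h1, Matrix.mul_one]
  rw [h3]
  have hdiag : Matrix.diagonal (fun m => ρ ^ 2 * dR m)
      = (ρ ^ 2) • Matrix.diagonal dR := by
    rw [← Matrix.diagonal_smul]; rfl
  rw [hdiag, Matrix.mul_smul]
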